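/- The only lines contained in the surface S = {x0*x3 - x1*x4 = x0*x1 + x1*x3 + x2^2 = 0} in P^4 are E5 = {x0 = x1 = x2 = 0} and E6 = {x1 = x2 = x3 = 0}, and these two lines intersect exactly in the point (0:0:0:0:1). -/
import Mathlib

open Submodule

private lemma aux_rank_contra {k : Type*} [Field k] {W : Submodule k (Fin 5 → k)}
    (hrank : Module.finrank k W = 2) {x : Fin 5 → k} (hx0 : x ≠ 0)
    (hle : W ≤ Submodule.span k {x}) : False := by
  have h1 : Module.finrank k W ≤ Module.finrank k (Submodule.span k {x}) :=
    Submodule.finrank_mono hle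
  rw [hrank, finrank_span_singleton hx0] at h1
  omega

/-- The only lines on the quartic surface ... -/
theorem stmt_1 (k : Type*) [Field k] [IsAlgClosed k] :
    let E5 : Submodule k (Fin 5 → k) :=
      Submodule.span k {![0, 0, 0, 1, 0], ![0, 0, 0, 0, 1]}
    let E6 : Submodule k (Fin 5 → k) :=
      Submodule.span k {![1, 0, 0, 0, 0], ![0, 0, 0, 0, 1]}
    let inS : Set (Fin 5 → k) :=
      {x | x 0 * x 3 - x 1 * x 4 = 0 ∧ x 0 * x 1 + x 1 * x 3 + (x 2) ^ 2 = 0}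
    (Module.finrank k E5 = 2 ∧ (E5 : Set (Fin 5 → k)) ⊆ inS) ∧
    (Module.finrank k E6 = 2 ∧ (E6 : Set (Fin 5 → k)) ⊆ inS) ∧
    (∀ W : Submodule k (Fin 5 → k), Module.finrank k W = 2 →
      (W : Set (Fin 5 → k)) ⊆ inS → W = E5 ∨ W = E6) ∧
    E5 ⊓ E6 = Submodule.span k {![(0 : k), 0, 0, 0, 1]} := by
  intro E5 E6 inS
  -- finrank of E5
  have hr5 : Module.finrank k E5 = 2 := by
    have hli : LinearIndependent k ![(![0,0,0,1,0] : Fin 5 → k), ![0,0,0,0,1]] := by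
      rw [LinearIndependent.pair_iff]
      intro s t h
      constructor
      · have := congrFun h 3; simpa using this
      · have := congrFun h 4; simpa using this
    have hset : ({![0,0,0,1,0], ![0,0,0,0,1]} : Set (Fin 5 → k)) =
        Set.range ![(![0,0,0,1,0] : Fin 5 → k), ![0,0,0,0,1]] := by
      simp only [Matrix.range_cons, Matrix.range_empty, Set.union_empty,
        Set.union_singleton]
      exact Set.pair_comm _ _
    show Module.finrank k (Submodule.span k
      ({![0,0,0,1,0], ![0,0,0,0,1]} : Set (Fin 5 → k))) = 2
    rw [hset, finrank_span_eq_card hli]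
    simp
  have hr6 : Module.finrank k E6 = 2 := by
    have hli : LinearIndependent k ![(![1,0,0,0,0] : Fin 5 → k), ![0,0,0,0,1]] := by
      rw [LinearIndependent.pair_iff]
      intro s t h
      constructor
      · have := congrFun h 0; simpa using this
      · have := congrFun h 4; simpa using this
    have hset : ({![1,0,0,0,0], ![0,0,0,0,1]} : Set (Fin 5 → k)) =
        Set.range ![(![1,0,0,0,0] : Fin 5 → k), ![0,0,0,0,1]] := by
      simp only [Matrix.range_cons, Matrix.range_empty, Set.union_empty,
        Set.union_singleton]
      exact Set.pair_comm _ _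
    show Module.finrank k (Submodule.span k
      ({![1,0,0,0,0], ![0,0,0,0,1]} : Set (Fin 5 → k))) = 2
    rw [hset, finrank_span_eq_card hli]
    simp
  have hs5 : (E5 : Set (Fin 5 → k)) ⊆ inS := by
    intro y hy
    rw [SetLike.mem_coe, Submodule.mem_span_pair] at hy
    obtain ⟨a, b, rfl⟩ := hy
    constructor <;> simp
  have hs6 : (E6 : Set (Fin 5 → k)) ⊆ inS := by
    intro y hy
    rw [SetLike.mem_coe, Submodule.mem_span_pair] at hy
    obtain ⟨a, b, rfl⟩ := hy
    constructor <;> simp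
  refine ⟨⟨hr5, hs5⟩, ⟨hr6, hs6⟩, ?_, ?_⟩
  · -- main classification
    intro W hrank hsub
    have hq1 : ∀ x ∈ W, x 0 * x 3 - x 1 * x 4 = 0 := fun x hx => (hsub hx).1
    have hq2 : ∀ x ∈ W, x 0 * x 1 + x 1 * x 3 + x 2 ^ 2 = 0 := fun x hx => (hsub hx).2
    have hq3 : ∀ x ∈ W, ∀ y ∈ W,
        x 0 * y 3 + x 3 * y 0 - x 1 * y 4 - x 4 * y 1 = 0 := by
      intro x hx y hy
      have h := hq1 (x + y) (W.add_mem hx hy)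
      simp only [Pi.add_apply] at h
      linear_combination h - hq1 x hx - hq1 y hy
    have hq4 : ∀ x ∈ W, ∀ y ∈ W,
        x 0 * y 1 + x 1 * y 0 + x 1 * y 3 + x 3 * y 1 + 2 * (x 2 * y 2) = 0 := by
      intro x hx y hy
      have h := hq2 (x + y) (W.add_mem hx hy)
      simp only [Pi.add_apply] at h
      linear_combination h - hq2 x hx - hq2 y hy
    have hM1 : ∀ x ∈ W, ∀ y ∈ W, x 2 * y 1 = x 1 * y 2 := by
      intro x hx y hy
      have h : (x 2 * y 1 - x 1 * y 2) ^ 2 = 0 := by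
        linear_combination (y 1)^2 * hq2 x hx + (x 1)^2 * hq2 y hy
          - (x 1 * y 1) * hq4 x hx y hy
      exact sub_eq_zero.mp (pow_eq_zero_iff (two_ne_zero) |>.mp h)
    have hM2 : ∀ x ∈ W, ∀ y ∈ W, x 2 * (y 0 + y 3) = y 2 * (x 0 + x 3) := by
      intro x hx y hy
      have h : (x 2 * (y 0 + y 3) - y 2 * (x 0 + x 3)) ^ 2 = 0 := by
        linear_combination (y 0 + y 3)^2 * hq2 x hx + (x 0 + x 3)^2 * hq2 y hy
          - ((x 0 + x 3) * (y 0 + y 3)) * hq4 x hx y hy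
      exact sub_eq_zero.mp (pow_eq_zero_iff (two_ne_zero) |>.mp h)
    by_cases hA : ∀ x ∈ W, x 2 = 0
    · by_cases hB : ∀ x ∈ W, x 1 = 0
      · by_cases hC : ∀ x ∈ W, x 0 = 0
        · -- W = E5
          left
          have hle : W ≤ E5 := by
            intro y hy
            refine Submodule.mem_span_pair.mpr ⟨y 3, y 4, ?_⟩
            funext i
            fin_cases i <;>
              simp [hA y hy, hB y hy, hC y hy]
          exact Submodule.eq_of_le_of_finrank_le hle (by rw [hrank, hr5])
        · -- W = E6
          right
          push_neg at hC
          obtain ⟨x, hx, hx0⟩ := hC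
          have hx3 : x 3 = 0 := by
            have h := hq1 x hx
            rw [hB x hx] at h
            have : x 0 * x 3 = 0 := by linear_combination h
            exact (mul_eq_zero.mp this).resolve_left hx0
          have hy3 : ∀ y ∈ W, y 3 = 0 := by
            intro y hy
            have h := hq3 x hx y hy
            rw [hx3, hB x hx, hB y hy] at h
            have : x 0 * y 3 = 0 := by linear_combination h
            exact (mul_eq_zero.mp this).resolve_left hx0
          have hle : W ≤ E6 := by
            intro y hy
            refine Submodule.mem_span_pair.mpr ⟨y 0, y 4, ?_⟩
            funext i
            fin_cases i <;>
              simp [hA y hy, hB y hy, hy3 y hy]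
          exact Submodule.eq_of_le_of_finrank_le hle (by rw [hrank, hr6])
      · -- some x1 ≠ 0 : contradiction
        exfalso
        push_neg at hB
        obtain ⟨x, hx, hx1⟩ := hB
        have hsx : x 0 + x 3 = 0 := by
          have h := hq2 x hx
          rw [hA x hx] at h
          have : x 1 * (x 0 + x 3) = 0 := by linear_combination h
          exact (mul_eq_zero.mp this).resolve_left hx1
        have hsy : ∀ y ∈ W, y 0 + y 3 = 0 := by
          intro y hy
          have h := hq4 x hx y hy
          rw [hA x hx, hA y hy] at h
          have : x 1 * (y 0 + y 3) = 0 := by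
            linear_combination h - (y 1) * hsx
          exact (mul_eq_zero.mp this).resolve_left hx1
        have hc0 : ∀ y ∈ W, x 1 * y 0 = x 0 * y 1 := by
          intro y hy
          have h : (x 1 * y 0 - x 0 * y 1) ^ 2 = 0 := by
            linear_combination (-(y 1)^2) * hq1 x hx + (-(x 1)^2) * hq1 y hy
              + (x 1 * y 1) * hq3 x hx y hy
              + (-2*(x 1)*(y 0)*(y 1) - (x 1)*(y 1)*(y 3) + (x 0)*(y 1)^2) * hsx
              + ((x 1)*(x 3)*(y 1) + (x 1)^2*(y 0)) * hsy y hy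
          exact sub_eq_zero.mp (pow_eq_zero_iff (two_ne_zero) |>.mp h)
        have hc4 : ∀ y ∈ W, x 1 * y 4 = x 4 * y 1 := by
          intro y hy
          have h : x 1 * (x 1 * y 4 - x 4 * y 1) = 0 := by
            linear_combination (2*(y 1)) * hq1 x hx + (-(x 1)) * hq3 x hx y hy
              + (-(x 1)*(y 0)) * hsx + ((x 0)*(x 1)) * hsy y hy
              + (2*(x 3)) * hc0 y hy
          exact sub_eq_zero.mp ((mul_eq_zero.mp h).resolve_left hx1)
        have hc3 : ∀ y ∈ W, x 1 * y 3 = x 3 * y 1 := by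
          intro y hy
          linear_combination (x 1) * hsy y hy - (y 1) * hsx - hc0 y hy
        have hkey : ∀ y ∈ W, (x 1) • y = (y 1) • x := by
          intro y hy
          funext i
          fin_cases i <;> simp only [Pi.smul_apply, smul_eq_mul]
          · show x 1 * y 0 = y 1 * x 0; linear_combination hc0 y hy
          · show x 1 * y 1 = y 1 * x 1; ring
          · show x 1 * y 2 = y 1 * x 2; rw [hA x hx, hA y hy]; ring
          · show x 1 * y 3 = y 1 * x 3; linear_combination hc3 y hy
          · show x 1 * y 4 = y 1 * x 4; linear_combination hc4 y hy
        have hxne : x ≠ 0 := fun h => hx1 (by rw [h]; rfl)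
        refine aux_rank_contra hrank hxne ?_
        intro y hy
        rw [Submodule.mem_span_singleton]
        refine ⟨(x 1)⁻¹ * y 1, ?_⟩
        rw [mul_smul, ← hkey y hy, inv_smul_smul₀ hx1]
    · -- some x2 ≠ 0 : contradiction
      exfalso
      push_neg at hA
      obtain ⟨x, hx, hx2⟩ := hA
      have hx1 : x 1 ≠ 0 := by
        intro h
        apply hx2
        have h2 := hq2 x hx
        rw [h] at h2
        have : x 2 ^ 2 = 0 := by linear_combination h2
        exact pow_eq_zero_iff (two_ne_zero) |>.mp this
      have hc0 : ∀ y ∈ W, x 2 * y 0 = x 0 * y 2 := by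
        intro y hy
        have h : (x 2 * y 0 - x 0 * y 2) ^ 2 = 0 := by
          linear_combination (-(y 2)^2) * hq1 x hx + (-(x 2)^2) * hq1 y hy
            + ((x 2)*(y 2)) * hq3 x hx y hy
            + ((x 4)*(y 2) - (x 2)*(y 4)) * hM1 x hx y hy
            + ((x 2)*(y 0) - (x 0)*(y 2)) * hM2 x hx y hy
        exact sub_eq_zero.mp (pow_eq_zero_iff (two_ne_zero) |>.mp h)
      have hc3 : ∀ y ∈ W, x 2 * y 3 = x 3 * y 2 := by
        intro y hy
        linear_combination hM2 x hx y hy - hc0 y hy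
      have hc4 : ∀ y ∈ W, x 2 * y 4 = x 4 * y 2 := by
        intro y hy
        by_cases hy2 : y 2 = 0
        · have hy1 : y 1 = 0 := by
            have := hM1 x hx y hy
            rw [hy2] at this
            have h' : x 2 * y 1 = 0 := by linear_combination this
            exact (mul_eq_zero.mp h').resolve_left hx2
          have hy0 : y 0 = 0 := by
            have := hc0 y hy
            rw [hy2] at this
            have h' : x 2 * y 0 = 0 := by linear_combination this
            exact (mul_eq_zero.mp h').resolve_left hx2
          have hy3 : y 3 = 0 := by
            have := hc3 y hy
            rw [hy2] at this
            have h' : x 2 * y 3 = 0 := by linear_combination this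
            exact (mul_eq_zero.mp h').resolve_left hx2
          have hy4 : y 4 = 0 := by
            have h := hq3 x hx y hy
            rw [hy0, hy1, hy3] at h
            have h' : x 1 * y 4 = 0 := by linear_combination -h
            exact (mul_eq_zero.mp h').resolve_left hx1
          rw [hy2, hy4]; ring
        · have h : x 1 * y 2 * (x 2 * y 4 - x 4 * y 2) = 0 := by
            linear_combination ((y 2)^2) * hq1 x hx + (-(x 2)^2) * hq1 y hy
              + (-(x 2)*(y 4)) * hM1 x hx y hy
              + ((x 2)*(y 3)) * hc0 y hy + ((x 0)*(y 2)) * hc3 y hy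
          have h' := (mul_eq_zero.mp h).resolve_left (mul_ne_zero hx1 hy2)
          exact sub_eq_zero.mp h'
      have hkey : ∀ y ∈ W, (x 2) • y = (y 2) • x := by
        intro y hy
        funext i
        fin_cases i <;> simp only [Pi.smul_apply, smul_eq_mul]
        · show x 2 * y 0 = y 2 * x 0; linear_combination hc0 y hy
        · show x 2 * y 1 = y 2 * x 1; linear_combination hM1 x hx y hy
        · show x 2 * y 2 = y 2 * x 2; ring
        · show x 2 * y 3 = y 2 * x 3; linear_combination hc3 y hy
        · show x 2 * y 4 = y 2 * x 4; linear_combination hc4 y hy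
      have hxne : x ≠ 0 := fun h => hx2 (by rw [h]; rfl)
      refine aux_rank_contra hrank hxne ?_
      intro y hy
      rw [Submodule.mem_span_singleton]
      refine ⟨(x 2)⁻¹ * y 2, ?_⟩
      rw [mul_smul, ← hkey y hy, inv_smul_smul₀ hx2]
  · -- intersection
    apply le_antisymm
    · intro y hy
      obtain ⟨hy5, hy6⟩ := Submodule.mem_inf.mp hy
      obtain ⟨a, b, hab⟩ := Submodule.mem_span_pair.mp hy5
      obtain ⟨c, d, hcd⟩ := Submodule.mem_span_pair.mp hy6
      have h3 : y 3 = 0 := by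
        have := congrFun hcd 3
        simpa using this.symm
      have ha : a = 0 := by
        have := congrFun hab 3
        simpa [h3] using this
      rw [Submodule.mem_span_singleton]
      refine ⟨b, ?_⟩
      rw [← hab, ha]
      funext i
      fin_cases i <;> simp
    · rw [Submodule.span_le, Set.singleton_subset_iff]
      refine Submodule.mem_inf.mpr ⟨?_, ?_⟩ <;>
        exact Submodule.subset_span (by simp)
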